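/- Coxeter's second ladder: Li₂(ρ¹²) = 2·Li₂(ρ⁶) + 3·Li₂(ρ⁴) + 4·Li₂(ρ³) − 6·Li₂(ρ²) + π²/10, where ρ = (√5−1)/2. -/

import Mathlib

/-- The polylogarithm `Li_s(x) = ∑_{n ≥ 1} x^n / n^s` as a real series. -/
noncomputable def Li (s : ℕ) (x : ℝ) : ℝ := ∑' n : ℕ, x ^ (n + 1) / (n + 1 : ℝ) ^ s

open Real Set Filter Topology

lemma summable_inv_sq : Summable (fun n : ℕ => 1 / ((n : ℝ) + 1) ^ 2) := by
  have h := (Real.summable_one_div_nat_pow (p := 2)).mpr (by norm_num)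
  have := (summable_nat_add_iff (f := fun n : ℕ => 1 / (n : ℝ) ^ 2) 1).mpr h
  simpa using this

lemma li2_summable {x : ℝ} (hx : |x| ≤ 1) :
    Summable (fun n : ℕ => x ^ (n + 1) / ((n : ℝ) + 1) ^ 2) := by
  apply Summable.of_norm_bounded summable_inv_sq
  intro n
  rw [norm_div, norm_pow, norm_pow]
  have h1 : ‖x‖ ≤ 1 := by simpa using hx
  have h2 : ‖((n : ℝ) + 1)‖ = (n : ℝ) + 1 := by
    rw [Real.norm_eq_abs, abs_of_nonneg]; positivity
  rw [h2]
  gcongr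
  exact pow_le_one₀ (norm_nonneg x) h1

lemma Li2_def (x : ℝ) : Li 2 x = ∑' n : ℕ, x ^ (n + 1) / ((n : ℝ) + 1) ^ 2 := by
  unfold Li
  norm_num

lemma Li2_zero : Li 2 0 = 0 := by
  rw [Li2_def]
  simp

lemma Li2_one : Li 2 1 = Real.pi ^ 2 / 6 := by
  rw [Li2_def]
  have h := hasSum_zeta_two
  have h2 : HasSum (fun n : ℕ => (1 : ℝ) / ((n : ℝ) + 1) ^ 2) (Real.pi ^ 2 / 6) := by
    have := (hasSum_nat_add_iff' (f := fun n : ℕ => (1 : ℝ) / (n : ℝ) ^ 2) 1).mpr (by simpa using h)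
    simpa using this
  simpa using h2.tsum_eq
lemma Li2_continuousOn : ContinuousOn (Li 2) (Icc (-1 : ℝ) 1) := by
  have : ContinuousOn (fun x : ℝ => ∑' n : ℕ, x ^ (n + 1) / ((n : ℝ) + 1) ^ 2)
      (Icc (-1 : ℝ) 1) := by
    apply continuousOn_tsum (u := fun n : ℕ => 1 / ((n : ℝ) + 1) ^ 2)
      (fun i => (continuous_pow _).continuousOn.div_const _) summable_inv_sq
    intro n x hx
    have h1 : |x| ≤ 1 := abs_le.mpr ⟨hx.1, hx.2⟩
    rw [norm_div, norm_pow, norm_pow]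
    have h2 : ‖((n : ℝ) + 1)‖ = (n : ℝ) + 1 := by
      rw [Real.norm_eq_abs, abs_of_nonneg]; positivity
    rw [h2]
    gcongr
    exact pow_le_one₀ (norm_nonneg x) (by simpa using h1)
  exact this.congr fun x _ => Li2_def x

lemma Li2_hasDerivAt {x : ℝ} (h : |x| < 1) :
    HasDerivAt (Li 2) (∑' n : ℕ, x ^ n / ((n : ℝ) + 1)) x := by
  set r : ℝ := (|x| + 1) / 2 with hr
  have hr0 : 0 ≤ r := by positivity
  have hxr : |x| < r := by rw [hr]; linarith
  have hr1 : r < 1 := by rw [hr]; linarith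
  have key : HasDerivAt (fun y : ℝ => ∑' n : ℕ, y ^ (n + 1) / ((n : ℝ) + 1) ^ 2)
      (∑' n : ℕ, x ^ n / ((n : ℝ) + 1)) x := by
    apply hasDerivAt_tsum_of_isPreconnected
      (u := fun n : ℕ => r ^ n)
      (g' := fun (n : ℕ) (y : ℝ) => y ^ n / ((n : ℝ) + 1))
      (summable_geometric_of_lt_one hr0 hr1)
      (isOpen_Ioo (a := -r) (b := r)) (convex_Ioo _ _).isPreconnected
    · intro n y _
      have h1 : HasDerivAt (fun y : ℝ => y ^ (n + 1)) (((n : ℝ) + 1) * y ^ n) y := by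
        simpa using hasDerivAt_pow (n + 1) y
      have h2 := h1.div_const (((n : ℝ) + 1) ^ 2)
      refine h2.congr_deriv ?_
      have hn : ((n : ℝ) + 1) ≠ 0 := by positivity
      field_simp
    · intro n y hy
      have hy1 : |y| ≤ r := le_of_lt (abs_lt.mpr ⟨hy.1, hy.2⟩)
      rw [norm_div]
      have h2 : ‖((n : ℝ) + 1)‖ = (n : ℝ) + 1 := by
        rw [Real.norm_eq_abs, abs_of_nonneg]; positivity
      rw [h2, norm_pow]
      calc ‖y‖ ^ n / ((n : ℝ) + 1) ≤ r ^ n / 1 := by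
            gcongr
            · exact hy1
            · simp
        _ = r ^ n := by simp
    · have : (0:ℝ) < r := by positivity
      exact mem_Ioo.mpr ⟨by linarith, this⟩
    · apply li2_summable; simp
    · exact mem_Ioo.mpr ⟨neg_lt_of_abs_lt hxr, lt_of_abs_lt hxr⟩
  have : Li 2 = fun y : ℝ => ∑' n : ℕ, y ^ (n + 1) / ((n : ℝ) + 1) ^ 2 := by
    funext y; exact Li2_def y
  rw [this]
  exact key

lemma Li2_hasDerivAt' {x : ℝ} (h0 : 0 < x) (h1 : x < 1) :
    HasDerivAt (Li 2) (-Real.log (1 - x) / x) x := by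
  have habs : |x| < 1 := abs_lt.mpr ⟨by linarith, h1⟩
  have hx : x ≠ 0 := ne_of_gt h0
  have hsum := Real.hasSum_pow_div_log_of_abs_lt_one habs
  have hsum2 : HasSum (fun n : ℕ => x ^ n / ((n : ℝ) + 1)) (-Real.log (1 - x) / x) := by
    have := hsum.div_const x
    rw [show (fun n : ℕ => x ^ n / ((n : ℝ) + 1)) = fun n : ℕ => x ^ (n + 1) / ((n : ℝ) + 1) / x from funext fun n => by
      rw [pow_succ]
      field_simp]
    exact this
  have := Li2_hasDerivAt habs
  rwa [hsum2.tsum_eq] at this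
noncomputable def Lr (x : ℝ) : ℝ := Li 2 x + Real.log x * Real.log (1 - x) / 2

lemma Lr_zero : Lr 0 = 0 := by simp [Lr, Li2_zero]

lemma Lr_one : Lr 1 = Real.pi ^ 2 / 6 := by simp [Lr, Li2_one]

lemma neg_log_one_sub_le {t : ℝ} (h0 : 0 ≤ t) (h1 : t ≤ 1/2) :
    -Real.log (1 - t) ≤ 2 * t := by
  have ht1 : (0:ℝ) < 1 - t := by linarith
  have h2 : (1:ℝ) + 2*t ≤ Real.exp (2*t) := by
    have := Real.add_one_le_exp (2*t); linarith
  have h3 : Real.exp (-(2*t)) ≤ 1 - t := by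
    have e0 : Real.exp (-(2*t)) * Real.exp (2*t) = 1 := by
      rw [← Real.exp_add]; simp
    have e3 : (0:ℝ) < Real.exp (-(2*t)) := Real.exp_pos _
    nlinarith [mul_le_mul_of_nonneg_left h2 e3.le]
  have h4 : -(2*t) ≤ Real.log (1 - t) := (Real.le_log_iff_exp_le ht1).mpr h3
  linarith

lemma loglog_cwa_zero : ContinuousWithinAt (fun t : ℝ => Real.log t * Real.log (1 - t))
    (Icc 0 1) 0 := by
  rw [ContinuousWithinAt]
  norm_num
  apply squeeze_zero_norm' (a := fun t : ℝ => 2 * Real.negMulLog t)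
  · have hmem : ∀ᶠ t in 𝓝[≥] (0:ℝ), t ∈ Ici (0:ℝ) := eventually_mem_nhdsWithin
    have hlt : ∀ᶠ t in 𝓝[≥] (0:ℝ), t < 1/2 :=
      eventually_nhdsWithin_of_eventually_nhds (eventually_lt_nhds (by norm_num))
    filter_upwards [hmem, hlt] with t ht htl
    have ht0 : (0:ℝ) ≤ t := ht
    rcases eq_or_lt_of_le ht0 with h | h
    · simp [← h, Real.negMulLog]
    · have hlog : Real.log t ≤ 0 := Real.log_nonpos (le_of_lt h) (by linarith)
      have hlog2 : Real.log (1 - t) ≤ 0 := Real.log_nonpos (by linarith) (by linarith)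
      rw [Real.norm_eq_abs, abs_mul, abs_of_nonpos hlog, abs_of_nonpos hlog2]
      have hb : -Real.log (1 - t) ≤ 2 * t := neg_log_one_sub_le ht0 (le_of_lt htl)
      have hb2 : 0 ≤ -Real.log t := by linarith
      calc (-Real.log t) * (-Real.log (1 - t)) ≤ (-Real.log t) * (2 * t) := by
            apply mul_le_mul_of_nonneg_left hb hb2
        _ = 2 * Real.negMulLog t := by rw [Real.negMulLog]; ring
  · have : Filter.Tendsto (fun t : ℝ => 2 * Real.negMulLog t) (𝓝 0) (𝓝 0) := by
      have h := (Real.continuous_negMulLog.tendsto 0).const_mul 2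
      simpa using h
    exact this.mono_left nhdsWithin_le_nhds

lemma loglog_continuousOn : ContinuousOn (fun t : ℝ => Real.log t * Real.log (1 - t))
    (Icc 0 1) := by
  intro x hx
  rcases eq_or_lt_of_le hx.1 with h0 | h0
  · rw [← h0]; exact loglog_cwa_zero
  rcases eq_or_lt_of_le hx.2 with h1 | h1
  · -- x = 1 : use symmetry t ↦ 1 - t
    subst h1
    have hmaps : Set.MapsTo (fun t : ℝ => 1 - t) (Icc 0 1) (Icc 0 1) := by
      intro t ht
      simp only [Set.mem_Icc] at ht ⊢
      constructor <;> linarith [ht.1, ht.2]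
    have hc : ContinuousWithinAt (fun t : ℝ => 1 - t) (Icc (0:ℝ) 1) 1 :=
      (continuous_const.sub continuous_id).continuousWithinAt
    have h0' : ContinuousWithinAt (fun t : ℝ => Real.log t * Real.log (1 - t)) (Icc 0 1)
        ((fun t : ℝ => 1 - t) 1) := by
      simpa using loglog_cwa_zero
    have := h0'.comp hc hmaps
    have heq : (fun t : ℝ => Real.log t * Real.log (1 - t)) ∘ (fun t : ℝ => 1 - t)
        = fun t : ℝ => Real.log t * Real.log (1 - t) := by
      funext t; simp [Function.comp]; ring
    rwa [heq] at this
  · -- interior point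
    apply ContinuousAt.continuousWithinAt
    apply ContinuousAt.mul
    · exact Real.continuousAt_log (ne_of_gt h0)
    · exact (Real.continuousAt_log (by linarith)).comp
        ((continuous_const.sub continuous_id).continuousAt)

lemma Lr_continuousOn : ContinuousOn Lr (Icc 0 1) := by
  apply ContinuousOn.add
  · exact Li2_continuousOn.mono (by intro t ht; exact ⟨by linarith [ht.1], ht.2⟩)
  · exact loglog_continuousOn.div_const 2

lemma Lr_hasDerivAt {x : ℝ} (h0 : 0 < x) (h1 : x < 1) :
    HasDerivAt Lr (-(Real.log (1 - x) / x + Real.log x / (1 - x)) / 2) x := by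
  have hx : x ≠ 0 := ne_of_gt h0
  have h1x : (1:ℝ) - x ≠ 0 := by linarith
  have ha : HasDerivAt (Li 2) (-Real.log (1 - x) / x) x := Li2_hasDerivAt' h0 h1
  have hlog : HasDerivAt Real.log x⁻¹ x := Real.hasDerivAt_log hx
  have hlog2 : HasDerivAt (fun y : ℝ => Real.log (1 - y)) (-(1 - x)⁻¹) x := by
    have hi : HasDerivAt (fun y : ℝ => 1 - y) (-1) x := by
      simpa using (hasDerivAt_id x).const_sub 1
    have := (Real.hasDerivAt_log h1x).comp x hi
    exact this.congr_deriv (by ring)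
  have hmul := (hlog.mul hlog2).div_const 2
  have := ha.add hmul
  refine this.congr_deriv ?_
  field_simp
  ring
lemma Lr_five_term {x y : ℝ} (hx0 : 0 < x) (hx1 : x < 1) (hy0 : 0 < y) (hy1 : y < 1) :
    Lr x + Lr y = Lr (x*y) + Lr (x*(1-y)/(1-x*y)) + Lr (y*(1-x)/(1-x*y)) := by
  set g : ℝ → ℝ := fun t =>
    Lr t + Lr y - Lr (t*y) - Lr (t*(1-y)/(1-t*y)) - Lr (y*(1-t)/(1-t*y)) with hgdef
  have hyne : (1:ℝ) - y > 0 := by linarith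
  -- basic bounds for t ∈ [x,1]
  have hden : ∀ t : ℝ, t ≤ 1 → 0 < 1 - t*y := by
    intro t ht; nlinarith
  have key : ∀ z ∈ Icc x 1, g z = g x := by
    apply constant_of_has_deriv_right_zero
    · -- continuity
      have c1 : ContinuousOn (fun t : ℝ => t) (Icc x 1) := continuousOn_id
      have c2 : ContinuousOn (fun t : ℝ => t*y) (Icc x 1) := (continuous_id.mul continuous_const).continuousOn
      have cden : ContinuousOn (fun t : ℝ => 1 - t*y) (Icc x 1) :=
        (continuous_const.sub (continuous_id.mul continuous_const)).continuousOn
      have hdenne : ∀ t ∈ Icc x 1, 1 - t*y ≠ 0 := fun t ht => ne_of_gt (hden t ht.2)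
      have c3 : ContinuousOn (fun t : ℝ => t*(1-y)/(1-t*y)) (Icc x 1) :=
        ((continuous_id.mul continuous_const).continuousOn).div cden hdenne
      have c4 : ContinuousOn (fun t : ℝ => y*(1-t)/(1-t*y)) (Icc x 1) :=
        ((continuous_const.mul (continuous_const.sub continuous_id)).continuousOn).div cden hdenne
      have m1 : MapsTo (fun t : ℝ => t) (Icc x 1) (Icc 0 1) := by
        intro t ht; simp only [mem_Icc] at *; constructor <;> linarith [ht.1, ht.2]
      have m2 : MapsTo (fun t : ℝ => t*y) (Icc x 1) (Icc 0 1) := by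
        intro t ht; simp only [mem_Icc] at *
        constructor
        · nlinarith [ht.1]
        · nlinarith [ht.2]
      have m3 : MapsTo (fun t : ℝ => t*(1-y)/(1-t*y)) (Icc x 1) (Icc 0 1) := by
        intro t ht; simp only [mem_Icc] at *
        have h := hden t ht.2
        constructor
        · apply div_nonneg _ h.le; nlinarith [ht.1]
        · rw [div_le_one h]; nlinarith [ht.2]
      have m4 : MapsTo (fun t : ℝ => y*(1-t)/(1-t*y)) (Icc x 1) (Icc 0 1) := by
        intro t ht; simp only [mem_Icc] at *
        have h := hden t ht.2
        constructor
        · apply div_nonneg _ h.le; nlinarith [ht.2]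
        · rw [div_le_one h]; nlinarith [ht.1]
      exact ((((Lr_continuousOn.comp c1 m1).add continuousOn_const).sub
        (Lr_continuousOn.comp c2 m2)).sub (Lr_continuousOn.comp c3 m3)).sub
        (Lr_continuousOn.comp c4 m4)
    · -- derivative zero
      intro t ht
      simp only [mem_Ico] at ht
      obtain ⟨htx, ht1⟩ := ht
      have ht0 : 0 < t := lt_of_lt_of_le hx0 htx
      have hd : 0 < 1 - t*y := hden t ht1.le
      have hu0 : 0 < t*(1-y)/(1-t*y) := by positivity
      have hu1 : t*(1-y)/(1-t*y) < 1 := by rw [div_lt_one hd]; nlinarith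
      have hv0 : 0 < y*(1-t)/(1-t*y) := by
        apply div_pos _ hd; nlinarith
      have hv1 : y*(1-t)/(1-t*y) < 1 := by rw [div_lt_one hd]; nlinarith
      have hty0 : 0 < t*y := by positivity
      have hty1 : t*y < 1 := by nlinarith
      -- derivatives
      have d1 : HasDerivAt Lr (-(Real.log (1 - t) / t + Real.log t / (1 - t)) / 2) t :=
        Lr_hasDerivAt ht0 ht1
      have dm2 : HasDerivAt (fun s : ℝ => s*y) y t := by
        simpa using (hasDerivAt_id t).mul_const y
      have d2 : HasDerivAt (fun s : ℝ => Lr (s*y))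
          ((-(Real.log (1 - t*y) / (t*y) + Real.log (t*y) / (1 - t*y)) / 2) * y) t :=
        by have := (Lr_hasDerivAt hty0 hty1).comp t dm2; exact this
      have dmu : HasDerivAt (fun s : ℝ => s*(1-y)/(1-s*y))
          (((1-y)*(1-t*y) - (t*(1-y))*(-y))/(1-t*y)^2) t := by
        apply HasDerivAt.div
        · simpa using (hasDerivAt_id t).mul_const (1-y)
        · simpa using ((hasDerivAt_id t).mul_const y).const_sub 1
        · exact ne_of_gt hd
      have d3 : HasDerivAt (fun s : ℝ => Lr (s*(1-y)/(1-s*y)))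
          ((-(Real.log (1 - t*(1-y)/(1-t*y)) / (t*(1-y)/(1-t*y))
            + Real.log (t*(1-y)/(1-t*y)) / (1 - t*(1-y)/(1-t*y))) / 2)
            * (((1-y)*(1-t*y) - (t*(1-y))*(-y))/(1-t*y)^2)) t :=
        by have := (Lr_hasDerivAt hu0 hu1).comp t dmu; exact this
      have dmv : HasDerivAt (fun s : ℝ => y*(1-s)/(1-s*y))
          (((-y)*(1-t*y) - (y*(1-t))*(-y))/(1-t*y)^2) t := by
        apply HasDerivAt.div
        · have : HasDerivAt (fun s : ℝ => y*(1-s)) (-y) t := by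
            have h1 : HasDerivAt (fun s : ℝ => 1-s) (-1) t := by
              simpa using (hasDerivAt_id t).const_sub 1
            have := h1.const_mul y
            exact this.congr_deriv (by ring)
          exact this
        · simpa using ((hasDerivAt_id t).mul_const y).const_sub 1
        · exact ne_of_gt hd
      have d4 : HasDerivAt (fun s : ℝ => Lr (y*(1-s)/(1-s*y)))
          ((-(Real.log (1 - y*(1-t)/(1-t*y)) / (y*(1-t)/(1-t*y))
            + Real.log (y*(1-t)/(1-t*y)) / (1 - y*(1-t)/(1-t*y))) / 2)
            * (((-y)*(1-t*y) - (y*(1-t))*(-y))/(1-t*y)^2)) t :=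
        by have := (Lr_hasDerivAt hv0 hv1).comp t dmv; exact this
      have dg := (((d1.add_const (Lr y)).sub d2).sub d3).sub d4
      have hzero : (-(Real.log (1 - t) / t + Real.log t / (1 - t)) / 2)
          - ((-(Real.log (1 - t*y) / (t*y) + Real.log (t*y) / (1 - t*y)) / 2) * y)
          - ((-(Real.log (1 - t*(1-y)/(1-t*y)) / (t*(1-y)/(1-t*y))
            + Real.log (t*(1-y)/(1-t*y)) / (1 - t*(1-y)/(1-t*y))) / 2)
            * (((1-y)*(1-t*y) - (t*(1-y))*(-y))/(1-t*y)^2))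
          - ((-(Real.log (1 - y*(1-t)/(1-t*y)) / (y*(1-t)/(1-t*y))
            + Real.log (y*(1-t)/(1-t*y)) / (1 - y*(1-t)/(1-t*y))) / 2)
            * (((-y)*(1-t*y) - (y*(1-t))*(-y))/(1-t*y)^2)) = 0 := by
        have hne1t : (1:ℝ)-t ≠ 0 := by nlinarith
        have hdne : (1:ℝ)-t*y ≠ 0 := ne_of_gt hd
        have hnet : t ≠ 0 := ne_of_gt ht0
        have hney : y ≠ 0 := ne_of_gt hy0
        have hne1y : (1:ℝ)-y ≠ 0 := ne_of_gt hyne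
        have hnum_u : t*(1-y) ≠ 0 := mul_ne_zero hnet hne1y
        have hnum_v : y*(1-t) ≠ 0 := mul_ne_zero hney hne1t
        have e1 : 1 - t*(1-y)/(1-t*y) = (1-t)/(1-t*y) := by
          field_simp; ring
        have e2 : 1 - y*(1-t)/(1-t*y) = (1-y)/(1-t*y) := by
          rw [eq_div_iff hdne, sub_mul, div_mul_cancel₀ _ hdne]; ring
        rw [e1, e2]
        rw [Real.log_div hne1t hdne, Real.log_div hnum_u hdne,
            Real.log_div hne1y hdne, Real.log_div hnum_v hdne,
            Real.log_mul hnet hne1y, Real.log_mul hney hne1t,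
            Real.log_mul hnet hney]
        field_simp
        ring
      rw [hzero] at dg
      exact dg.hasDerivWithinAt
  have h1 := key 1 (right_mem_Icc.mpr hx1.le)
  have hg1 : g 1 = 0 := by
    have e1 : (1:ℝ)*(1-y)/(1-1*y) = 1 := by
      rw [one_mul, one_mul, div_self (ne_of_gt hyne)]
    have e2 : y*(1-1)/(1-1*y) = 0 := by simp
    rw [hgdef]
    show Lr 1 + Lr y - Lr (1*y) - Lr (1*(1-y)/(1-1*y)) - Lr (y*(1-1)/(1-1*y)) = 0
    rw [e1, e2, one_mul, Lr_zero]
    ring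
  have hgx : g x = 0 := by rw [← h1, hg1]
  simp only [hgdef] at hgx
  linarith
lemma Lr_reflection {x : ℝ} (hx0 : 0 < x) (hx1 : x < 1) :
    Lr x + Lr (1 - x) = Real.pi ^ 2 / 6 := by
  set g : ℝ → ℝ := fun t => Lr t + Lr (1 - t) with hgdef
  have key : ∀ z ∈ Icc x 1, g z = g x := by
    apply constant_of_has_deriv_right_zero
    · have m1 : MapsTo (fun t : ℝ => t) (Icc x 1) (Icc 0 1) := by
        intro t ht; simp only [mem_Icc] at *; constructor <;> linarith [ht.1, ht.2]
      have m2 : MapsTo (fun t : ℝ => 1 - t) (Icc x 1) (Icc 0 1) := by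
        intro t ht; simp only [mem_Icc] at *; constructor <;> linarith [ht.1, ht.2]
      exact (Lr_continuousOn.comp continuousOn_id m1).add
        (Lr_continuousOn.comp (continuous_const.sub continuous_id).continuousOn m2)
    · intro t ht
      simp only [mem_Ico] at ht
      have ht0 : 0 < t := lt_of_lt_of_le hx0 ht.1
      have ht1 : t < 1 := ht.2
      have d1 : HasDerivAt Lr (-(Real.log (1 - t) / t + Real.log t / (1 - t)) / 2) t :=
        Lr_hasDerivAt ht0 ht1
      have dm : HasDerivAt (fun s : ℝ => 1 - s) (-1) t := by
        simpa using (hasDerivAt_id t).const_sub 1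
      have d2 : HasDerivAt (fun s : ℝ => Lr (1 - s))
          ((-(Real.log (1 - (1-t)) / (1-t) + Real.log (1-t) / (1 - (1-t))) / 2) * (-1)) t :=
        (Lr_hasDerivAt (by linarith) (by linarith)).comp t dm
      have dg := d1.add d2
      have hzero : (-(Real.log (1 - t) / t + Real.log t / (1 - t)) / 2)
          + ((-(Real.log (1 - (1-t)) / (1-t) + Real.log (1-t) / (1 - (1-t))) / 2) * (-1)) = 0 := by
        have e : (1:ℝ) - (1 - t) = t := by ring
        rw [e]
        ring
      rw [hzero] at dg
      exact dg.hasDerivWithinAt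
  have h1 := key 1 (right_mem_Icc.mpr hx1.le)
  have hg1 : g 1 = Real.pi ^ 2 / 6 := by
    rw [hgdef]
    show Lr 1 + Lr (1 - 1) = Real.pi ^ 2 / 6
    norm_num [Lr_one, Lr_zero]
  have := h1.symm.trans hg1
  rw [hgdef] at this
  exact this
set_option maxHeartbeats 1000000 in
lemma coxeter_key {r : ℝ} (hr : r ^ 2 = 1 - r) (hrl : (11:ℝ)/18 < r)
    (hru : r < (89:ℝ)/144) :
    Li 2 (r ^ 12)
      = 2 * Li 2 (r ^ 6) + 3 * Li 2 (r ^ 4)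
        + 4 * Li 2 (r ^ 3) - 6 * Li 2 (r ^ 2)
        + Real.pi ^ 2 / 10 := by
  have hr0 : (0:ℝ) < r := by linarith
  have hr1 : r < 1 := by linarith
  have hp2 : r^2 < 1 := pow_lt_one₀ hr0.le hr1 (by norm_num)
  have hp3 : r^3 < 1 := pow_lt_one₀ hr0.le hr1 (by norm_num)
  have hp4 : r^4 < 1 := pow_lt_one₀ hr0.le hr1 (by norm_num)
  have hp6 : r^6 < 1 := pow_lt_one₀ hr0.le hr1 (by norm_num)
  have hp12 : r^12 < 1 := pow_lt_one₀ hr0.le hr1 (by norm_num)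
  have R2 : Lr r + Lr (r^2) = Real.pi^2/6 := by
    have H := Lr_reflection hr0 hr1
    rw [show (1:ℝ) - r = r^2 from by linear_combination -hr] at H
    exact H
  have R7 : Lr (r^3) + Lr (2-2*r) = Real.pi^2/6 := by
    have H := Lr_reflection (pow_pos hr0 3) hp3
    rw [show (1:ℝ) - r^3 = 2-2*r from by linear_combination (1-r) * hr] at H
    exact H
  have E1 : Lr (r) + Lr (r) = Lr (r^2) + Lr (r^2) + Lr (r^2) := by
    have H := Lr_five_term (x := r) (y := r) (hr0) (hr1) (hr0) (hr1)
    have e1 : (r) * (r) = r^2 := by linear_combination (0) * hr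
    have hne : (1:ℝ) - (r) * (r) ≠ 0 := by rw [e1]; intro hc; linarith [hp2, hp3, hp4, hp6, hp12]
    have e2 : (r) * (1 - (r)) / (1 - (r) * (r)) = r^2 := by
      rw [div_eq_iff hne]; linear_combination ((1)*r^2 - (1)*r) * hr
    rw [e2, e1] at H
    exact H
  have E3 : Lr (r^2) + Lr (r) = Lr (r^3) + Lr (((1-r)/2)) + Lr (((1:ℝ)/2)) := by
    have H := Lr_five_term (x := r^2) (y := r) (pow_pos hr0 2) (pow_lt_one₀ hr0.le hr1 (by norm_num)) (hr0) (hr1)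
    have e1 : (r^2) * (r) = r^3 := by linear_combination (0) * hr
    have hne : (1:ℝ) - (r^2) * (r) ≠ 0 := by rw [e1]; intro hc; linarith [hp2, hp3, hp4, hp6, hp12]
    have e2 : (r^2) * (1 - (r)) / (1 - (r^2) * (r)) = ((1-r)/2) := by
      rw [div_eq_iff hne]; linear_combination ((-1/2)*r^2 + (1/2)) * hr
    have e3 : (r) * (1 - (r^2)) / (1 - (r^2) * (r)) = ((1:ℝ)/2) := by
      rw [div_eq_iff hne]; linear_combination ((-1/2)*r + (1/2)) * hr
    rw [e2, e3, e1] at H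
    exact H
  have E4 : Lr (r^2) + Lr (r^2) = Lr (r^4) + Lr (((2-r)/5)) + Lr (((2-r)/5)) := by
    have H := Lr_five_term (x := r^2) (y := r^2) (pow_pos hr0 2) (pow_lt_one₀ hr0.le hr1 (by norm_num)) (pow_pos hr0 2) (pow_lt_one₀ hr0.le hr1 (by norm_num))
    have e1 : (r^2) * (r^2) = r^4 := by linear_combination (0) * hr
    have hne : (1:ℝ) - (r^2) * (r^2) ≠ 0 := by rw [e1]; intro hc; linarith [hp2, hp3, hp4, hp6, hp12]
    have e2 : (r^2) * (1 - (r^2)) / (1 - (r^2) * (r^2)) = ((2-r)/5) := by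
      rw [div_eq_iff hne]; linear_combination ((-1/5)*r^3 - (2/5)*r^2 + (1/5)*r + (2/5)) * hr
    rw [e2, e1] at H
    exact H
  have E5 : Lr (r^3) + Lr (r) = Lr (r^4) + Lr (((3-4*r)/5)) + Lr (((4-2*r)/5)) := by
    have H := Lr_five_term (x := r^3) (y := r) (pow_pos hr0 3) (pow_lt_one₀ hr0.le hr1 (by norm_num)) (hr0) (hr1)
    have e1 : (r^3) * (r) = r^4 := by linear_combination (0) * hr
    have hne : (1:ℝ) - (r^3) * (r) ≠ 0 := by rw [e1]; intro hc; linarith [hp2, hp3, hp4, hp6, hp12]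
    have e2 : (r^3) * (1 - (r)) / (1 - (r^3) * (r)) = ((3-4*r)/5) := by
      rw [div_eq_iff hne]; linear_combination ((-4/5)*r^3 + (2/5)*r^2 - (1/5)*r + (3/5)) * hr
    have e3 : (r) * (1 - (r^3)) / (1 - (r^3) * (r)) = ((4-2*r)/5) := by
      rw [div_eq_iff hne]; linear_combination ((-2/5)*r^3 + (1/5)*r^2 - (3/5)*r + (4/5)) * hr
    rw [e2, e3, e1] at H
    exact H
  have E6 : Lr (r^3) + Lr (r^3) = Lr (r^6) + Lr (((1-r)/2)) + Lr (((1-r)/2)) := by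
    have H := Lr_five_term (x := r^3) (y := r^3) (pow_pos hr0 3) (pow_lt_one₀ hr0.le hr1 (by norm_num)) (pow_pos hr0 3) (pow_lt_one₀ hr0.le hr1 (by norm_num))
    have e1 : (r^3) * (r^3) = r^6 := by linear_combination (0) * hr
    have hne : (1:ℝ) - (r^3) * (r^3) ≠ 0 := by rw [e1]; intro hc; linarith [hp2, hp3, hp4, hp6, hp12]
    have e2 : (r^3) * (1 - (r^3)) / (1 - (r^3) * (r^3)) = ((1-r)/2) := by
      rw [div_eq_iff hne]; linear_combination ((-1/2)*r^5 - (1/2)*r^3 + (1/2)*r^2 + (1/2)) * hr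
    rw [e2, e1] at H
    exact H
  have E8 : Lr (r^6) + Lr (r^6) = Lr (r^12) + Lr (((3-4*r)/10)) + Lr (((3-4*r)/10)) := by
    have H := Lr_five_term (x := r^6) (y := r^6) (pow_pos hr0 6) (pow_lt_one₀ hr0.le hr1 (by norm_num)) (pow_pos hr0 6) (pow_lt_one₀ hr0.le hr1 (by norm_num))
    have e1 : (r^6) * (r^6) = r^12 := by linear_combination (0) * hr
    have hne : (1:ℝ) - (r^6) * (r^6) ≠ 0 := by rw [e1]; intro hc; linarith [hp2, hp3, hp4, hp6, hp12]
    have e2 : (r^6) * (1 - (r^6)) / (1 - (r^6) * (r^6)) = ((3-4*r)/10) := by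
      rw [div_eq_iff hne]; linear_combination ((-2/5)*r^11 - (3/10)*r^10 - (1/10)*r^9 - (1/5)*r^8 + (1/10)*r^7 - (3/10)*r^6 + (2/5)*r^5 + (3/10)*r^4 + (1/10)*r^3 + (1/5)*r^2 - (1/10)*r + (3/10)) * hr
    rw [e2, e1] at H
    exact H
  have E9 : Lr (((1:ℝ)/2)) + Lr (r^2) = Lr (((1-r)/2)) + Lr (r^2) + Lr (r^3) := by
    have H := Lr_five_term (x := ((1:ℝ)/2)) (y := r^2) (by linarith) (by linarith) (pow_pos hr0 2) (pow_lt_one₀ hr0.le hr1 (by norm_num))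
    have e1 : (((1:ℝ)/2)) * (r^2) = ((1-r)/2) := by linear_combination ((1/2)) * hr
    have hne : (1:ℝ) - (((1:ℝ)/2)) * (r^2) ≠ 0 := by rw [e1]; intro hc; linarith [hp2, hp3, hp4, hp6, hp12]
    have e2 : (((1:ℝ)/2)) * (1 - (r^2)) / (1 - (((1:ℝ)/2)) * (r^2)) = r^2 := by
      rw [div_eq_iff hne]; linear_combination ((1/2)*r^2 - (1/2)*r - (1/2)) * hr
    have e3 : (r^2) * (1 - (((1:ℝ)/2))) / (1 - (((1:ℝ)/2)) * (r^2)) = r^3 := by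
      rw [div_eq_iff hne]; linear_combination ((1/2)*r^3 - (1/2)*r^2) * hr
    rw [e2, e3, e1] at H
    exact H
  have E10 : Lr ((2-2*r)) + Lr (r) = Lr ((4*r-2)) + Lr (((4-2*r)/5)) + Lr (((2-r)/5)) := by
    have H := Lr_five_term (x := (2-2*r)) (y := r) (by linarith) (by linarith) (hr0) (hr1)
    have e1 : ((2-2*r)) * (r) = (4*r-2) := by linear_combination ((-2)) * hr
    have hne : (1:ℝ) - ((2-2*r)) * (r) ≠ 0 := by rw [e1]; intro hc; linarith [hp2, hp3, hp4, hp6, hp12]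
    have e2 : ((2-2*r)) * (1 - (r)) / (1 - ((2-2*r)) * (r)) = ((4-2*r)/5) := by
      rw [div_eq_iff hne]; linear_combination ((4/5)*r - (6/5)) * hr
    have e3 : (r) * (1 - ((2-2*r))) / (1 - ((2-2*r)) * (r)) = ((2-r)/5) := by
      rw [div_eq_iff hne]; linear_combination ((2/5)*r + (2/5)) * hr
    rw [e2, e3, e1] at H
    exact H
  have E11 : Lr (((3-4*r)/5)) + Lr (((1:ℝ)/2)) = Lr (((3-4*r)/10)) + Lr (r^6) + Lr ((4*r-2)) := by
    have H := Lr_five_term (x := ((3-4*r)/5)) (y := ((1:ℝ)/2)) (by linarith) (by linarith) (by linarith) (by linarith)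
    have e1 : (((3-4*r)/5)) * (((1:ℝ)/2)) = ((3-4*r)/10) := by linear_combination (0) * hr
    have hne : (1:ℝ) - (((3-4*r)/5)) * (((1:ℝ)/2)) ≠ 0 := by rw [e1]; intro hc; linarith [hp2, hp3, hp4, hp6, hp12]
    have e2 : (((3-4*r)/5)) * (1 - (((1:ℝ)/2))) / (1 - (((3-4*r)/5)) * (((1:ℝ)/2))) = r^6 := by
      rw [div_eq_iff hne]; linear_combination ((-2/5)*r^5 - (3/10)*r^4 - (1/10)*r^3 - (1/5)*r^2 + (1/10)*r - (3/10)) * hr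
    have e3 : (((1:ℝ)/2)) * (1 - (((3-4*r)/5))) / (1 - (((3-4*r)/5)) * (((1:ℝ)/2))) = (4*r-2) := by
      rw [div_eq_iff hne]; linear_combination ((-8/5)) * hr
    rw [e2, e3, e1] at H
    exact H
  have hmain : 4*Lr (r^3) + 3*Lr (r^4) + 2*Lr (r^6) - Lr (r^12) = 3*Real.pi^2/10 := by
    linarith [E1, R2, E3, E4, E5, E6, R7, E8, E9, E10, E11]
  have hLr2 : Lr (r^2) = Real.pi^2/15 := by linarith [E1, R2]
  -- logarithm bookkeeping
  set c : ℝ := Real.log r with hcdef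
  set d : ℝ := Real.log 2 with hddef
  set m : ℝ := Real.log (1 - r^4) with hmdef
  have hl2 : Real.log (1 - r^2) = c := by
    rw [show (1:ℝ) - r^2 = r from by linear_combination -hr]
  have hl3 : Real.log (1 - r^3) = d + 2*c := by
    rw [show (1:ℝ) - r^3 = 2*r^2 from by linear_combination ((-1)*r - (1)) * hr,
      Real.log_mul (by norm_num) (by positivity), Real.log_pow]
    push_cast; ring
  have hl6 : Real.log (1 - r^6) = 2*d + 3*c := by
    rw [show (1:ℝ) - r^6 = 2^2*r^3 from by
        linear_combination ((-1)*r^4 + (1)*r^3 - (2)*r^2 - (1)*r - (1)) * hr,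
      Real.log_mul (by norm_num) (by positivity), Real.log_pow, Real.log_pow]
    push_cast; ring
  have hl12 : Real.log (1 - r^12) = 3*d + 4*c + m := by
    have h14 : (0:ℝ) < 1 - r^4 := by linarith
    rw [show (1:ℝ) - r^12 = (2^3*r^4)*(1-r^4) from by
        linear_combination ((-1)*r^10 + (1)*r^9 - (2)*r^8 + (3)*r^7 + (3)*r^6 + (3)*r^4 - (3)*r^3 - (2)*r^2 - (1)*r - (1)) * hr,
      Real.log_mul (by positivity) (ne_of_gt h14),
      Real.log_mul (by norm_num) (by positivity), Real.log_pow, Real.log_pow]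
    push_cast; ring
  have hlog : ∀ k : ℕ, Real.log (r^k) = (k:ℝ) * c := fun k => Real.log_pow r k
  have conv : ∀ k : ℕ, Li 2 (r^k) = Lr (r^k) - ((k:ℝ)*c) * Real.log (1 - r^k) / 2 := by
    intro k
    have : Lr (r^k) = Li 2 (r^k) + Real.log (r^k) * Real.log (1 - r^k) / 2 := rfl
    rw [this, hlog k]
    ring
  have c2 := conv 2; have c3 := conv 3; have c4 := conv 4
  have c6 := conv 6; have c12 := conv 12
  rw [hl2] at c2
  rw [hl3] at c3
  rw [hl6] at c6
  rw [hl12] at c12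
  rw [← hmdef] at c4
  push_cast at c2 c3 c4 c6 c12
  linear_combination c12 - 2*c6 - 3*c4 - 4*c3 + 6*c2 - hmain + 6*hLr2

theorem stmt_8 :
    Li 2 (((Real.sqrt 5 - 1) / 2) ^ 12)
      = 2 * Li 2 (((Real.sqrt 5 - 1) / 2) ^ 6) + 3 * Li 2 (((Real.sqrt 5 - 1) / 2) ^ 4)
        + 4 * Li 2 (((Real.sqrt 5 - 1) / 2) ^ 3) - 6 * Li 2 (((Real.sqrt 5 - 1) / 2) ^ 2)
        + Real.pi ^ 2 / 10 := by
  have hs2 : Real.sqrt 5 ^ 2 = 5 := Real.sq_sqrt (by norm_num)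
  have hs0 : (0:ℝ) ≤ Real.sqrt 5 := Real.sqrt_nonneg 5
  exact coxeter_key (by linear_combination hs2 / 4) (by nlinarith) (by nlinarith)
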